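/- If u is a weak supersolution of L_K u + V u = 0 in Ω and u ≥ 0 a.e. on ℝⁿ \ Ω, then u ≥ 0 a.e. on ℝⁿ (weak maximum principle). -/

import Mathlib

open MeasureTheory Real Filter
open scoped ENNReal RealInnerProductSpace

noncomputable section

/-- Euclidean space ℝⁿ. -/
abbrev En (n : ℕ) := EuclideanSpace ℝ (Fin n)

/-- The squared Gagliardo seminorm `[u]_s²`. -/
def gagliardoSq (n : ℕ) (s : ℝ) (u : En n → ℝ) : ℝ≥0∞ :=
  ∫⁻ p : En n × En n,
    ENNReal.ofReal ((u p.1 - u p.2) ^ 2 * ‖p.1 - p.2‖ ^ (-((n : ℝ) + 2 * s)))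

/-- `K` is a symmetric measurable kernel comparable to `c⬝|y|^{-(n+2s)}`
with ellipticity constants `lam ≤ Lam`. -/
def IsKernel (n : ℕ) (s lam Lam c : ℝ) (K : En n → ℝ) : Prop :=
  Measurable K ∧ (∀ y : En n, K (-y) = K y) ∧
    ∀ y : En n, y ≠ 0 →
      lam * c * ‖y‖ ^ (-((n : ℝ) + 2 * s)) ≤ K y ∧
        K y ≤ Lam * c * ‖y‖ ^ (-((n : ℝ) + 2 * s))

/-- The nonlocal operator `L_K` applied to a test function. -/
def LK (n : ℕ) (K φ : En n → ℝ) (x : En n) : ℝ :=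
  (1 / 2) * ∫ y : En n, (2 * φ x - φ (x + y) - φ (x - y)) * K y

/-- `V ∈ L^q_loc(ℝⁿ)`. -/
def LocLq (n : ℕ) (q : ℝ) (V : En n → ℝ) : Prop :=
  ∀ A : Set (En n), IsCompact A → MemLp V (ENNReal.ofReal q) (volume.restrict A)

/-- The space `X^s_0(Ω)`: measurable functions vanishing a.e. outside `Ω`
with finite Gagliardo seminorm. -/
def Xs0 (n : ℕ) (s : ℝ) (Ω : Set (En n)) : Set (En n → ℝ) :=
  {u | Measurable u ∧ (∀ᵐ x : En n ∂volume, x ∉ Ω → u x = 0) ∧ gagliardoSq n s u < ⊤}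

/-- `∫_Ω V u²`. -/
def VIntSq (n : ℕ) (V : En n → ℝ) (Ω : Set (En n)) (u : En n → ℝ) : ℝ≥0∞ :=
  ∫⁻ x in Ω, ENNReal.ofReal (V x * u x ^ 2)

/-- The space `Y^s_0(Ω) = X^s_0(Ω) ∩ L²_V(Ω)`. -/
def Ys0 (n : ℕ) (s : ℝ) (Ω : Set (En n)) (V : En n → ℝ) : Set (En n → ℝ) :=
  {u | u ∈ Xs0 n s Ω ∧ VIntSq n V Ω u < ⊤}

/-- The squared `Y^s_0(Ω)` norm: `[u]_s² + ∫_Ω V u²`. -/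
def YnormSq (n : ℕ) (s : ℝ) (Ω : Set (En n)) (V : En n → ℝ) (u : En n → ℝ) : ℝ≥0∞ :=
  gagliardoSq n s u + VIntSq n V Ω u

/-- The kernel quadratic form `∬ (u(x)-u(y))² K(x-y) dx dy` (as an `ℝ≥0∞`-integral). -/
def kerSq (n : ℕ) (K : En n → ℝ) (u : En n → ℝ) : ℝ≥0∞ :=
  ∫⁻ p : En n × En n, ENNReal.ofReal ((u p.1 - u p.2) ^ 2 * K (p.1 - p.2))

/-- The bilinear form `(1/2)∬ (u(x)-u(y))(φ(x)-φ(y)) K(x-y) dx dy`. -/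
def bilin (n : ℕ) (K : En n → ℝ) (u φ : En n → ℝ) : ℝ :=
  (1 / 2) * ∫ p : En n × En n, (u p.1 - u p.2) * (φ p.1 - φ p.2) * K (p.1 - p.2)

/-- The energy functional `E_V`. -/
def energy (n : ℕ) (K V f : En n → ℝ) (Ω : Set (En n)) (v : En n → ℝ) : ℝ :=
  (1 / 2) * (kerSq n K v).toReal + (VIntSq n V Ω v).toReal - 2 * ∫ x in Ω, f x * v x

/-- The region `ℝ^{2n}_Ω = (ℝⁿ×ℝⁿ) \ (Ωᶜ×Ωᶜ)`. -/
def R2n (n : ℕ) (Ω : Set (En n)) : Set (En n × En n) := (Ωᶜ ×ˢ Ωᶜ)ᶜ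

/-- The squared Gagliardo seminorm restricted to `ℝ^{2n}_Ω`. -/
def gagliardoSqOn (n : ℕ) (s : ℝ) (Ω : Set (En n)) (u : En n → ℝ) : ℝ≥0∞ :=
  ∫⁻ p in R2n n Ω,
    ENNReal.ofReal ((u p.1 - u p.2) ^ 2 * ‖p.1 - p.2‖ ^ (-((n : ℝ) + 2 * s)))

/-- The kernel quadratic form restricted to `ℝ^{2n}_Ω`. -/
def kerSqOn (n : ℕ) (Ω : Set (En n)) (K : En n → ℝ) (u : En n → ℝ) : ℝ≥0∞ :=
  ∫⁻ p in R2n n Ω, ENNReal.ofReal ((u p.1 - u p.2) ^ 2 * K (p.1 - p.2))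

/-- The bilinear form restricted to `ℝ^{2n}_Ω`. -/
def bilinOn (n : ℕ) (Ω : Set (En n)) (K : En n → ℝ) (u φ : En n → ℝ) : ℝ :=
  (1 / 2) * ∫ p in R2n n Ω, (u p.1 - u p.2) * (φ p.1 - φ p.2) * K (p.1 - p.2)

/-- The energy functional `E_V` with the double integral over `ℝ^{2n}_Ω`. -/
def energyOn (n : ℕ) (Ω : Set (En n)) (K V f : En n → ℝ) (v : En n → ℝ) : ℝ :=
  (1 / 2) * (kerSqOn n Ω K v).toReal + (VIntSq n V Ω v).toReal - 2 * ∫ x in Ω, f x * v x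


/-- The negative part `a⁻ = max (-a) 0`. -/
def np (a : ℝ) : ℝ := max (-a) 0

lemma np_nonneg (a : ℝ) : 0 ≤ np a := le_max_right _ _

lemma np_eq_zero_of_nonneg {a : ℝ} (h : 0 ≤ a) : np a = 0 :=
  max_eq_right (by linarith)

lemma nonneg_of_np_eq_zero {a : ℝ} (h : np a = 0) : 0 ≤ a := by
  by_contra hc
  push_neg at hc
  rw [np, max_eq_left (by linarith)] at h
  linarith

lemma np_ineq (a b : ℝ) : (a - b) * (np a - np b) ≤ -(np a - np b) ^ 2 := by
  unfold np
  rcases le_total a 0 with ha | ha <;> rcases le_total b 0 with hb | hb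
  · rw [max_eq_left (by linarith), max_eq_left (by linarith)]; nlinarith
  · rw [max_eq_left (by linarith), max_eq_right (by linarith)]; nlinarith
  · rw [max_eq_right (by linarith), max_eq_left (by linarith)]; nlinarith
  · rw [max_eq_right (by linarith), max_eq_right (by linarith)]; nlinarith

lemma np_mul (a : ℝ) : a * np a = -(np a) ^ 2 := by
  unfold np
  rcases le_total a 0 with ha | ha
  · rw [max_eq_left (by linarith)]; ring
  · rw [max_eq_right (by linarith)]; ring

lemma np_abs (a b : ℝ) : |np a - np b| ≤ |a - b| := by
  have h := abs_max_sub_max_le_abs (-a) (-b) 0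
  calc |np a - np b| = |max (-a) 0 - max (-b) 0| := rfl
    _ ≤ |(-a) - (-b)| := h
    _ = |a - b| := by rw [show (-a) - (-b) = -(a - b) by ring, abs_neg]

lemma np_sq (a b : ℝ) : (np a - np b) ^ 2 ≤ (a - b) ^ 2 := by
  have h := abs_le.mp (np_abs a b)
  calc (np a - np b) ^ 2 ≤ |a - b| ^ 2 := sq_le_sq' h.1 h.2
    _ = (a - b) ^ 2 := sq_abs _

lemma np_sq' (a : ℝ) : (np a) ^ 2 ≤ a ^ 2 := by
  unfold np
  rcases le_total a 0 with ha | ha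
  · rw [max_eq_left (by linarith)]; nlinarith [sq_nonneg a]
  · rw [max_eq_right (by linarith)]; nlinarith [sq_nonneg a]

lemma prod_ae_fst (n : ℕ) {P : En n → Prop} (h : ∀ᵐ x : En n ∂volume, P x) :
    ∀ᵐ p : En n × En n ∂volume, P p.1 := by
  rw [ae_iff] at h ⊢
  have hsub : {p : En n × En n | ¬ P p.1} ⊆ {x : En n | ¬ P x} ×ˢ (Set.univ : Set (En n)) :=
    fun p hp => ⟨hp, Set.mem_univ _⟩
  refine measure_mono_null hsub ?_
  rw [Measure.volume_eq_prod, Measure.prod_prod, h, zero_mul]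

lemma prod_ae_snd (n : ℕ) {P : En n → Prop} (h : ∀ᵐ x : En n ∂volume, P x) :
    ∀ᵐ p : En n × En n ∂volume, P p.2 := by
  rw [ae_iff] at h ⊢
  have hsub : {p : En n × En n | ¬ P p.2} ⊆ (Set.univ : Set (En n)) ×ˢ {x : En n | ¬ P x} :=
    fun p hp => ⟨Set.mem_univ _, hp⟩
  refine measure_mono_null hsub ?_
  rw [Measure.volume_eq_prod, Measure.prod_prod, h, mul_zero]

set_option maxHeartbeats 1000000 in
/-- weak maximum principle: if `u` is a weak supersolution of
`L_K u + V u = 0` in `Ω` and `u ≥ 0` a.e. on `ℝⁿ \ Ω`, then `u ≥ 0` a.e. on `ℝⁿ`. -/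
theorem stmt8 (n : ℕ) (hn : 2 ≤ n) (s : ℝ) (hs0 : 0 < s) (hs1 : s < 1)
    (c lam Lam : ℝ) (hlam : 0 < lam) (hlamLam : lam ≤ Lam) (hc : 0 < c)
    (hc1 : c * ∫ ξ : En n, (1 - Real.cos (ξ ⟨0, by omega⟩)) * ‖ξ‖ ^ (-((n : ℝ) + 2 * s)) = 1)
    (K : En n → ℝ) (hK : IsKernel n s lam Lam c K)
    (q : ℝ) (hq : (n : ℝ) / (2 * s) < q)
    (V : En n → ℝ) (hVmeas : Measurable V) (hV0 : ∀ x, 0 ≤ V x) (hVq : LocLq n q V)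
    (Ω : Set (En n)) (hΩo : IsOpen Ω) (hΩb : Bornology.IsBounded Ω)
    (u : En n → ℝ) (hu_meas : Measurable u)
    (hu_g : gagliardoSqOn n s Ω u < ⊤)
    (hu_L2 : MemLp u 2 (volume.restrict Ω))
    (hu_V : VIntSq n V Ω u < ⊤)
    (hsuper : ∀ φ ∈ Ys0 n s Ω V, (∀ x, 0 ≤ φ x) →
      (0 : ℝ) ≤ bilinOn n Ω K u φ + ∫ x in Ω, V x * u x * φ x)
    (hbd : ∀ᵐ x : En n ∂volume, x ∉ Ω → 0 ≤ u x) :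
    ∀ᵐ x : En n ∂volume, 0 ≤ u x := by
  haveI : Nonempty (Fin n) := ⟨⟨0, by omega⟩⟩
  -- the test function φ = u⁻
  set φ : En n → ℝ := fun x => np (u x) with hφdef
  have hφmeas : Measurable φ := (hu_meas.neg).max measurable_const
  have hφ0 : ∀ x, 0 ≤ φ x := fun x => np_nonneg _
  have hφout : ∀ᵐ x : En n ∂volume, x ∉ Ω → φ x = 0 := by
    filter_upwards [hbd] with x hx hxΩ
    exact np_eq_zero_of_nonneg (hx hxΩ)
  -- basic measurability
  have hΩm : MeasurableSet Ω := hΩo.measurableSet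
  have hR2nm : MeasurableSet (R2n n Ω) := ((hΩm.compl.prod hΩm.compl)).compl
  -- the diagonal is null
  have hdiag : (volume : Measure (En n × En n)) {p : En n × En n | p.1 = p.2} = 0 := by
    have hm : MeasurableSet {p : En n × En n | p.1 = p.2} :=
      measurableSet_eq_fun measurable_fst measurable_snd
    rw [Measure.volume_eq_prod, Measure.prod_apply hm]
    simp [Set.preimage, Set.eq_singleton_iff_unique_mem]
  have hne0 : ∀ᵐ p : En n × En n ∂volume, p.1 ≠ p.2 := by
    rw [ae_iff]; simpa using hdiag
  have hne : ∀ᵐ p : En n × En n ∂(volume.restrict (R2n n Ω)), p.1 ≠ p.2 :=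
    ae_restrict_of_ae hne0
  -- the kernel is a.e. positive and bounded off the diagonal
  have hKpos : ∀ᵐ p : En n × En n ∂(volume.restrict (R2n n Ω)), 0 < K (p.1 - p.2) := by
    filter_upwards [hne] with p hp
    have h1 : (0:ℝ) < ‖p.1 - p.2‖ := norm_pos_iff.mpr (sub_ne_zero.mpr hp)
    have h2 := (hK.2.2 _ (sub_ne_zero.mpr hp)).1
    have h3 : (0:ℝ) < ‖p.1 - p.2‖ ^ (-((n : ℝ) + 2 * s)) := Real.rpow_pos_of_pos h1 _
    nlinarith [mul_pos (mul_pos hlam hc) h3]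
  have hKle : ∀ᵐ p : En n × En n ∂(volume.restrict (R2n n Ω)),
      K (p.1 - p.2) ≤ Lam * c * ‖p.1 - p.2‖ ^ (-((n : ℝ) + 2 * s)) := by
    filter_upwards [hne] with p hp
    exact (hK.2.2 _ (sub_ne_zero.mpr hp)).2
  have hLc : (0:ℝ) < Lam * c := mul_pos (lt_of_lt_of_le hlam hlamLam) hc
  -- Step A: the quadratic form of u with kernel K is finite on R2n
  have hF_fin : ∫⁻ p : En n × En n in R2n n Ω,
      ENNReal.ofReal ((u p.1 - u p.2) ^ 2 * K (p.1 - p.2)) < ⊤ := by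
    have key : ∫⁻ p : En n × En n in R2n n Ω,
        ENNReal.ofReal ((u p.1 - u p.2) ^ 2 * K (p.1 - p.2))
        ≤ ENNReal.ofReal (Lam * c) * gagliardoSqOn n s Ω u := by
      rw [gagliardoSqOn, ← lintegral_const_mul' _ _ ENNReal.ofReal_ne_top]
      refine lintegral_mono_ae ?_
      filter_upwards [hKle] with p hp
      rw [← ENNReal.ofReal_mul hLc.le]
      refine ENNReal.ofReal_le_ofReal ?_
      nlinarith [mul_nonneg (sub_nonneg.mpr hp) (sq_nonneg (u p.1 - u p.2))]
    exact lt_of_le_of_lt key (ENNReal.mul_lt_top ENNReal.ofReal_lt_top hu_g)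
  -- Step B: integrability of the bilinear integrand F and the quadratic integrand G
  set F : En n × En n → ℝ :=
    fun p => (u p.1 - u p.2) * (φ p.1 - φ p.2) * K (p.1 - p.2) with hFdef
  set G : En n × En n → ℝ :=
    fun p => (φ p.1 - φ p.2) ^ 2 * K (p.1 - p.2) with hGdef
  have hFmeas : Measurable F :=
    (((hu_meas.comp measurable_fst).sub (hu_meas.comp measurable_snd)).mul
      ((hφmeas.comp measurable_fst).sub (hφmeas.comp measurable_snd))).mul
      (hK.1.comp (measurable_fst.sub measurable_snd))
  have hGmeas : Measurable G :=
    ((((hφmeas.comp measurable_fst).sub (hφmeas.comp measurable_snd)).pow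
      measurable_const)).mul (hK.1.comp (measurable_fst.sub measurable_snd))
  have hFbound : ∀ᵐ p : En n × En n ∂(volume.restrict (R2n n Ω)),
      ‖F p‖ ≤ (u p.1 - u p.2) ^ 2 * K (p.1 - p.2) := by
    filter_upwards [hKpos] with p hKp
    have h3 : |φ p.1 - φ p.2| ≤ |u p.1 - u p.2| := np_abs _ _
    have h4 : ‖F p‖ = |u p.1 - u p.2| * |φ p.1 - φ p.2| * K (p.1 - p.2) := by
      rw [hFdef]
      simp only [Real.norm_eq_abs, abs_mul, abs_of_pos hKp]
    rw [h4]
    have h6 : 0 ≤ (|u p.1 - u p.2| - |φ p.1 - φ p.2|) * (|u p.1 - u p.2| * K (p.1 - p.2)) :=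
      mul_nonneg (sub_nonneg.mpr h3) (mul_nonneg (abs_nonneg _) hKp.le)
    nlinarith [h6, sq_abs (u p.1 - u p.2)]
  have hFint : Integrable F (volume.restrict (R2n n Ω)) := by
    refine ⟨hFmeas.aestronglyMeasurable, ?_⟩
    rw [hasFiniteIntegral_iff_norm]
    refine lt_of_le_of_lt (lintegral_mono_ae ?_) hF_fin
    filter_upwards [hFbound] with p hp
    exact ENNReal.ofReal_le_ofReal hp
  have hGF : ∀ᵐ p : En n × En n ∂(volume.restrict (R2n n Ω)), ‖G p‖ ≤ ‖F p‖ := by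
    filter_upwards [hKpos] with p hKp
    have h3 : |φ p.1 - φ p.2| ≤ |u p.1 - u p.2| := np_abs _ _
    have h4 : ‖F p‖ = |u p.1 - u p.2| * |φ p.1 - φ p.2| * K (p.1 - p.2) := by
      rw [hFdef]; simp only [Real.norm_eq_abs, abs_mul, abs_of_pos hKp]
    have h5 : ‖G p‖ = |φ p.1 - φ p.2| ^ 2 * K (p.1 - p.2) := by
      rw [hGdef]
      simp only [Real.norm_eq_abs, abs_mul, abs_of_pos hKp, abs_pow, sq_abs]
    rw [h4, h5]
    have h6 : 0 ≤ (|u p.1 - u p.2| - |φ p.1 - φ p.2|) * (|φ p.1 - φ p.2| * K (p.1 - p.2)) :=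
      mul_nonneg (sub_nonneg.mpr h3) (mul_nonneg (abs_nonneg _) hKp.le)
    nlinarith [h6]
  have hGint : Integrable G (volume.restrict (R2n n Ω)) :=
    hFint.mono hGmeas.aestronglyMeasurable hGF
  have hFG : ∀ᵐ p : En n × En n ∂(volume.restrict (R2n n Ω)), F p ≤ -G p := by
    filter_upwards [hKpos] with p hKp
    have h := mul_le_mul_of_nonneg_right (np_ineq (u p.1) (u p.2)) hKp.le
    have hφ1 : φ p.1 = np (u p.1) := rfl
    have hφ2 : φ p.2 = np (u p.2) := rfl
    rw [hFdef, hGdef]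
    simp only [hφ1, hφ2]
    nlinarith [h]
  -- Step: membership of φ in Y^s_0
  have hmem : φ ∈ Ys0 n s Ω V := by
    have hout1 : ∀ᵐ p : En n × En n ∂volume, p.1 ∉ Ω → φ p.1 = 0 := prod_ae_fst n hφout
    have hout2 : ∀ᵐ p : En n × En n ∂volume, p.2 ∉ Ω → φ p.2 = 0 := prod_ae_snd n hφout
    have hcompl : ∫⁻ p : En n × En n in (R2n n Ω)ᶜ,
        ENNReal.ofReal ((φ p.1 - φ p.2) ^ 2 * ‖p.1 - p.2‖ ^ (-((n : ℝ) + 2 * s))) = 0 := by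
      have hz : ∀ᵐ p : En n × En n ∂(volume.restrict (R2n n Ω)ᶜ),
          ENNReal.ofReal ((φ p.1 - φ p.2) ^ 2 * ‖p.1 - p.2‖ ^ (-((n : ℝ) + 2 * s))) = 0 := by
        filter_upwards [ae_restrict_of_ae hout1, ae_restrict_of_ae hout2,
          ae_restrict_mem hR2nm.compl] with p h1 h2 hp
        rw [R2n, compl_compl] at hp
        rw [h1 hp.1, h2 hp.2]
        simp
      rw [lintegral_congr_ae hz, lintegral_zero]
    have hR2n_part : ∫⁻ p : En n × En n in R2n n Ω,
        ENNReal.ofReal ((φ p.1 - φ p.2) ^ 2 * ‖p.1 - p.2‖ ^ (-((n : ℝ) + 2 * s)))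
        ≤ gagliardoSqOn n s Ω u := by
      refine lintegral_mono fun p => ENNReal.ofReal_le_ofReal ?_
      exact mul_le_mul_of_nonneg_right (np_sq (u p.1) (u p.2))
        (Real.rpow_nonneg (norm_nonneg _) _)
    have hgag : gagliardoSq n s φ < ⊤ := by
      rw [gagliardoSq, ← lintegral_add_compl _ hR2nm, hcompl, add_zero]
      exact lt_of_le_of_lt hR2n_part hu_g
    have hVφ : VIntSq n V Ω φ < ⊤ := by
      refine lt_of_le_of_lt (lintegral_mono fun x => ENNReal.ofReal_le_ofReal ?_) hu_V
      exact mul_le_mul_of_nonneg_left (np_sq' (u x)) (hV0 x)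
    exact ⟨⟨hφmeas, hφout, hgag⟩, hVφ⟩
  -- use u⁻ as a test function
  have hsup := hsuper φ hmem hφ0
  -- the potential term is nonpositive
  have hVterm : (∫ x in Ω, V x * u x * φ x) ≤ 0 := by
    refine integral_nonpos fun x => ?_
    have h := np_mul (u x)
    have hφx : φ x = np (u x) := rfl
    simp only [Pi.zero_apply, hφx]
    have h2 : V x * (u x * np (u x)) = V x * (-(np (u x)) ^ 2) := by rw [h]
    nlinarith [h2, mul_nonneg (hV0 x) (sq_nonneg (np (u x)))]
  -- the bilinear term is at most -(1/2)∫G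
  have hbil : bilinOn n Ω K u φ ≤ -(1/2) * ∫ p in R2n n Ω, G p := by
    rw [bilinOn]
    have h := integral_mono_ae hFint hGint.neg hFG
    simp only [Pi.neg_apply] at h
    rw [integral_neg] at h
    have : (∫ p in R2n n Ω, (u p.1 - u p.2) * (φ p.1 - φ p.2) * K (p.1 - p.2))
        = ∫ p in R2n n Ω, F p := rfl
    rw [this]
    linarith
  have hGnonneg : ∀ᵐ p : En n × En n ∂(volume.restrict (R2n n Ω)), 0 ≤ G p := by
    filter_upwards [hKpos] with p hKp
    exact mul_nonneg (sq_nonneg _) hKp.le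
  have hGint_nonneg : 0 ≤ ∫ p in R2n n Ω, G p := integral_nonneg_of_ae hGnonneg
  have hGzero : ∫ p in R2n n Ω, G p = 0 := by
    linarith [hsup, hbil, hVterm, hGint_nonneg]
  have hG0 : ∀ᵐ p : En n × En n ∂(volume.restrict (R2n n Ω)), G p = 0 := by
    have := (integral_eq_zero_iff_of_nonneg_ae hGnonneg hGint).mp hGzero
    filter_upwards [this] with p hp using hp
  -- hence φ(x) = φ(y) a.e. on R2n
  have hphi_eq : ∀ᵐ p : En n × En n ∂volume, p ∈ R2n n Ω → φ p.1 = φ p.2 := by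
    rw [← ae_restrict_iff' hR2nm]
    filter_upwards [hG0, hKpos] with p hp hKp
    simp only [hGdef] at hp
    rcases mul_eq_zero.mp hp with h | h
    · have h7 := sq_eq_zero_iff.mp h
      have h8 := sub_eq_zero.mp h7
      exact h8
    · exact absurd h hKp.ne'
  -- hence φ = 0 a.e. on Ω × Ωᶜ slices
  have hT : ∀ᵐ p : En n × En n ∂volume, p ∈ Ω ×ˢ (Ωᶜ : Set (En n)) → φ p.1 = 0 := by
    filter_upwards [hphi_eq, prod_ae_snd n hφout] with p h1 h2 hp
    have hmemR : p ∈ R2n n Ω := by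
      rw [R2n]
      exact fun hc => hc.1 hp.1
    rw [h1 hmemR]
    exact h2 hp.2
  have hnullT : volume ((Ω ∩ {x | φ x ≠ 0}) ×ˢ (Ωᶜ : Set (En n))) = 0 := by
    refine measure_mono_null ?_ (ae_iff.mp hT)
    rintro ⟨x, y⟩ ⟨⟨hx1, hx2⟩, hy⟩
    simp only [Set.mem_setOf_eq, Classical.not_imp]
    exact ⟨⟨hx1, hy⟩, hx2⟩
  -- Ωᶜ has positive measure
  have hΩc : volume (Ωᶜ : Set (En n)) ≠ 0 := by
    intro hzero
    have h1 : (volume : Measure (En n)) Set.univ = ⊤ :=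
      measure_univ_of_isAddLeftInvariant volume
    have h2 : (volume : Measure (En n)) Set.univ ≤ volume Ω + volume Ωᶜ := by
      rw [← Set.union_compl_self Ω]
      exact measure_union_le _ _
    have h3 : volume Ω < ⊤ := hΩb.measure_lt_top
    rw [h1, hzero, add_zero] at h2
    exact h3.ne (top_le_iff.mp h2)
  have hnullΩ : volume (Ω ∩ {x | φ x ≠ 0}) = 0 := by
    rw [Measure.volume_eq_prod, Measure.prod_prod] at hnullT
    rcases mul_eq_zero.mp hnullT with h | h
    · exact h
    · exact absurd h hΩc
  -- conclude
  have hin : ∀ᵐ x : En n ∂volume, x ∈ Ω → φ x = 0 := by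
    rw [ae_iff]
    refine measure_mono_null ?_ hnullΩ
    intro x hx
    simp only [Set.mem_setOf_eq, Classical.not_imp] at hx
    exact ⟨hx.1, hx.2⟩
  filter_upwards [hin, hbd] with x h1 h2
  by_cases hx : x ∈ Ω
  · exact nonneg_of_np_eq_zero (h1 hx)
  · exact h2 hx
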